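/- arXiv:1807.08658 — 3 statements merged into one kernel-verified Lean document; each statement's English description precedes it below -/
import Mathlib

section
/- Let a = (a_1, a_2, ...) and e = (e_1, e_2, ...) be arbitrary real sequences satisfying a_i ≥ e_j for all i, j (i.e., inf a ≥ sup e). Then the matrix S^{a,e} = [S^{a,e}(m,k)]_{m,k ≥ 0} is totally non-negative. -/
open Polynomial Finset

/-- The numbers `S^{a,e}(m,k)` (0-indexed: `a i`, `e i` denote `a_{i+1}`, `e_{i+1}`),
uniquely determined by `∏_{i=1}^m (x - e_i) = ∑_{k=0}^m S^{a,e}(m,k) ∏_{i=1}^k (x - a_i)`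
together with `S^{a,e}(m,k) = 0` for `k > m`. -/
def SaeRel (a e : ℕ → ℝ) (S : ℕ → ℕ → ℝ) : Prop :=
  (∀ m k : ℕ, m < k → S m k = 0) ∧
  ∀ m : ℕ, ∏ i ∈ Finset.range m, (X - C (e i)) =
    ∑ k ∈ Finset.range (m + 1), C (S m k) * ∏ i ∈ Finset.range k, (X - C (a i))

/-- The cap-index function for restricted growth: `rgsF a e i` is the (0-indexed)
index of the cap for `e i`; the cap for `e 0` is `a 0`, and the cap index increments
exactly when equality with the cap holds. -/
noncomputable def rgsF (a e : ℕ → ℝ) : ℕ → ℕ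
  | 0 => 0
  | i + 1 => if e i = a (rgsF a e i) then rgsF a e i + 1 else rgsF a e i

/-- `e` is a restricted growth sequence relative to `a`. -/
def IsRGS (a e : ℕ → ℝ) : Prop := ∀ i : ℕ, e i ≤ a (rgsF a e i)

/-- An infinite matrix (rows and columns indexed by `ℕ`) is totally non-negative if
every minor is non-negative. -/
def TotallyNonneg (M : ℕ → ℕ → ℝ) : Prop :=
  ∀ (p : ℕ) (r c : Fin p → ℕ), StrictMono r → StrictMono c →
    0 ≤ (Matrix.of fun i j => M (r i) (c j)).det

namespace Stmt12Aux

/-! ### Polynomial layer -/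

noncomputable def Pp (x : ℕ → ℝ) (k : ℕ) : Polynomial ℝ :=
  ∏ i ∈ Finset.range k, (X - C (x i))

lemma Pp_monic (x : ℕ → ℝ) (k : ℕ) : (Pp x k).Monic :=
  monic_prod_of_monic _ _ fun i _ => monic_X_sub_C (x i)

lemma Pp_natDegree (x : ℕ → ℝ) (k : ℕ) : (Pp x k).natDegree = k := by
  rw [Pp, natDegree_prod]
  · simp [natDegree_X_sub_C]
  · intro i _; exact (monic_X_sub_C (x i)).ne_zero

lemma lindep (x : ℕ → ℝ) : ∀ (n : ℕ) (g : ℕ → ℝ),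
    (∑ k ∈ Finset.range n, C (g k) * Pp x k) = 0 → ∀ k < n, g k = 0 := by
  intro n
  induction n with
  | zero => intro g _ k hk; omega
  | succ n ih =>
    intro g hg k hk
    have htop : g n = 0 := by
      have h1 := congrArg (fun P => P.coeff n) hg
      simp only [finset_sum_coeff, coeff_zero, coeff_C_mul] at h1
      rw [Finset.sum_range_succ] at h1
      have h2 : ∀ k ∈ Finset.range n, g k * (Pp x k).coeff n = 0 := by
        intro k hk
        rw [coeff_eq_zero_of_natDegree_lt, mul_zero]
        rw [Pp_natDegree]; exact Finset.mem_range.1 hk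
      rw [Finset.sum_eq_zero h2, zero_add] at h1
      have h3 : (Pp x n).coeff n = 1 := by
        have := (Pp_monic x n).coeff_natDegree
        rwa [Pp_natDegree] at this
      rw [h3, mul_one] at h1
      exact h1
    rcases Nat.lt_succ_iff_lt_or_eq.1 hk with h | h
    · apply ih g _ k h
      rw [Finset.sum_range_succ, htop] at hg
      simpa using hg
    · rw [h]; exact htop

lemma row_uniq (x : ℕ → ℝ) (n : ℕ) (α β : ℕ → ℝ)
    (h : (∑ k ∈ Finset.range n, C (α k) * Pp x k) = ∑ k ∈ Finset.range n, C (β k) * Pp x k) :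
    ∀ k < n, α k = β k := by
  intro k hk
  have h0 : (∑ k ∈ Finset.range n, C (α k - β k) * Pp x k) = 0 := by
    simp only [map_sub, sub_mul, Finset.sum_sub_distrib]
    rw [h, sub_self]
  have h2 : α k - β k = 0 := lindep x n (fun k => α k - β k) h0 k hk
  linarith

def dseq (x : ℕ → ℝ) (c0 : ℝ) (t : ℕ) : ℕ → ℝ := fun i => if i < t then x i else c0

noncomputable def Fmat (e : ℕ → ℝ) (c0 : ℝ) (t : ℕ) : ℕ → ℕ → ℝ := fun m k =>
  (if k = m then 1 else 0) + (if k + 1 = m ∧ t < m then c0 - e t else 0)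

noncomputable def Gmat (a : ℕ → ℝ) (c0 : ℝ) (t : ℕ) : ℕ → ℕ → ℝ := fun m k =>
  if k = m then 1 else if t ≤ k ∧ k < m then (a t - c0)^(m-k) else 0

lemma Pp_dseq_low (x : ℕ → ℝ) (c0 : ℝ) {t k : ℕ} (h : k ≤ t) :
    Pp (dseq x c0 t) k = Pp x k := by
  apply Finset.prod_congr rfl
  intro i hi
  rw [dseq]
  rw [if_pos (by have := Finset.mem_range.1 hi; omega)]

lemma Pp_dseq_add (x : ℕ → ℝ) (c0 : ℝ) (t s : ℕ) :
    Pp (dseq x c0 t) (t+s) = Pp x t * (X - C c0)^s := by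
  induction s with
  | zero => simpa using Pp_dseq_low x c0 (le_refl t)
  | succ s ih =>
    rw [show t+(s+1) = (t+s)+1 from rfl, Pp, Finset.prod_range_succ, ← Pp, ih]
    rw [show dseq x c0 t (t+s) = c0 from if_neg (by omega)]
    ring

lemma geom_expand (y z : ℝ) : ∀ s : ℕ, (X - C z)^s =
    C ((y-z)^s) + ∑ j ∈ Finset.range s, C ((y-z)^(s-1-j)) * ((X - C y) * (X - C z)^j) := by
  intro s
  induction s with
  | zero => simp
  | succ s ih =>
    have hsub : ∀ j, j < s → s - (j+1) = s - 1 - j := by omega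
    have hXz : (X - C z : Polynomial ℝ) = (X - C y) + C (y - z) := by rw [map_sub]; ring
    simp only [Nat.add_sub_cancel]
    rw [Finset.sum_range_succ' (fun j => C ((y-z)^(s - j)) * ((X - C y) * (X - C z)^j)) s]
    have hcong : ∀ j ∈ Finset.range s, C ((y-z)^(s - (j+1))) * ((X - C y) * (X - C z)^(j+1))
        = (C ((y-z)^(s-1-j)) * ((X - C y) * (X - C z)^j)) * (X - C z) := by
      intro j hj; rw [hsub j (Finset.mem_range.1 hj)]; ring
    rw [Finset.sum_congr rfl hcong]
    rw [pow_succ, ih, add_mul, Finset.sum_mul]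
    have hC : (C ((y-z)^(s+1)) : Polynomial ℝ) = C ((y-z)^s) * C (y-z) := by
      rw [← C_mul, ← pow_succ]
    rw [hC]
    nth_rewrite 1 [hXz]
    simp only [Nat.sub_zero, pow_zero, mul_one]
    ring


/-! ### Triangular matrices over ℕ, composition -/

def tri (M : ℕ → ℕ → ℝ) : Prop := ∀ m k : ℕ, m < k → M m k = 0

noncomputable def mulT (A B : ℕ → ℕ → ℝ) : ℕ → ℕ → ℝ :=
  fun m k => ∑ j ∈ Finset.range (m+1), A m j * B j k

def deltaM : ℕ → ℕ → ℝ := fun m k => if m = k then 1 else 0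

lemma SaeRel_delta (x : ℕ → ℝ) : SaeRel x x deltaM := by
  constructor
  · intro m k h; simp [deltaM]; omega
  · intro m
    have : ∀ k ∈ Finset.range (m+1),
        C (deltaM m k) * ∏ i ∈ Finset.range k, (X - C (x i))
          = if m = k then ∏ i ∈ Finset.range k, (X - C (x i)) else 0 := by
      intro k _
      by_cases h : m = k <;> simp [deltaM, h]
    rw [Finset.sum_congr rfl this, Finset.sum_ite_eq (Finset.range (m+1)) m]
    simp

lemma SaeRel_comp (x y z : ℕ → ℝ) (A B : ℕ → ℕ → ℝ)
    (hA : SaeRel x y A) (hB : SaeRel y z B) : SaeRel x z (mulT B A) := by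
  constructor
  · intro m k h
    apply Finset.sum_eq_zero
    intro j hj
    rw [hA.1 j k (lt_of_le_of_lt (Nat.lt_succ_iff.1 (Finset.mem_range.1 hj)) h), mul_zero]
  · intro m
    rw [hB.2 m]
    have h1 : ∀ j ∈ Finset.range (m+1),
        C (B m j) * ∏ i ∈ Finset.range j, (X - C (y i))
        = ∑ k ∈ Finset.range (m+1), C (B m j) * C (A j k) * ∏ i ∈ Finset.range k, (X - C (x i)) := by
      intro j hj
      rw [hA.2 j]
      rw [Finset.mul_sum]
      rw [← Finset.sum_subset (Finset.range_subset_range.2 (Nat.succ_le_succ (Nat.lt_succ_iff.1 (Finset.mem_range.1 hj))))]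
      · exact Finset.sum_congr rfl fun k _ => by ring
      · intro k _ hk
        rw [hA.1 j k (by simpa using hk)]
        simp
    rw [Finset.sum_congr rfl h1, Finset.sum_comm]
    apply Finset.sum_congr rfl
    intro k _
    rw [mulT, map_sum, Finset.sum_mul]
    apply Finset.sum_congr rfl
    intro j _
    rw [map_mul]





lemma SaeRel_F (e : ℕ → ℝ) (c0 : ℝ) (t : ℕ) :
    SaeRel (dseq e c0 t) (dseq e c0 (t+1)) (Fmat e c0 t) := by
  constructor
  · intro m k h
    rw [Fmat]
    rw [if_neg (by omega), if_neg (by omega)]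
    simp
  · intro m
    have hLHS : ∏ i ∈ Finset.range m, (X - C (dseq e c0 (t+1) i)) = Pp (dseq e c0 (t+1)) m := rfl
    have hbase : ∀ k, (∏ i ∈ Finset.range k, (X - C (dseq e c0 t i))) = Pp (dseq e c0 t) k :=
      fun k => rfl
    simp only [hLHS, hbase, Fmat, map_add, add_mul, Finset.sum_add_distrib]
    have h1 : ∑ k ∈ Finset.range (m+1), C (if k = m then (1:ℝ) else 0) * Pp (dseq e c0 t) k
        = Pp (dseq e c0 t) m := by
      have : ∀ k ∈ Finset.range (m+1), C (if k = m then (1:ℝ) else 0) * Pp (dseq e c0 t) k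
          = if k = m then Pp (dseq e c0 t) k else 0 := by
        intro k _; by_cases h : k = m <;> simp [h]
      rw [Finset.sum_congr rfl this, Finset.sum_ite_eq' (Finset.range (m+1)) m]
      simp
    rw [h1]
    by_cases ht : t < m
    · obtain ⟨s, rfl⟩ : ∃ s, m = t + 1 + s := ⟨m - t - 1, by omega⟩
      have h2 : ∑ k ∈ Finset.range (t+1+s+1),
          C (if k + 1 = t+1+s ∧ t < t+1+s then c0 - e t else 0) * Pp (dseq e c0 t) k
          = C (c0 - e t) * Pp (dseq e c0 t) (t+s) := by
        have : ∀ k ∈ Finset.range (t+1+s+1),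
            C (if k + 1 = t+1+s ∧ t < t+1+s then c0 - e t else 0) * Pp (dseq e c0 t) k
            = if k = t+s then C (c0 - e t) * Pp (dseq e c0 t) k else 0 := by
          intro k _
          by_cases h : k = t + s
          · rw [if_pos (by omega), if_pos h]
          · rw [if_neg (by omega), if_neg h]; simp
        rw [Finset.sum_congr rfl this, Finset.sum_ite_eq' (Finset.range (t+1+s+1)) (t+s)]
        rw [if_pos (by simp)]
      rw [h2]
      have e1 : Pp (dseq e c0 (t+1)) (t+1+s) = Pp e t * (X - C (e t)) * (X - C c0)^s := by
        rw [show t+1+s = (t+1)+s from rfl, Pp_dseq_add]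
        rw [Pp, Finset.prod_range_succ, ← Pp]
      have e2 : Pp (dseq e c0 t) (t+1+s) = Pp e t * (X - C c0)^(s+1) := by
        rw [show t+1+s = t+(s+1) by omega, Pp_dseq_add]
      have e3 : Pp (dseq e c0 t) (t+s) = Pp e t * (X - C c0)^s := Pp_dseq_add e c0 t s
      rw [e1, e2, e3]
      have : (X - C (e t) : Polynomial ℝ) = (X - C c0) + C (c0 - e t) := by
        rw [map_sub]; ring
      rw [this]; ring
    · have h2 : ∑ k ∈ Finset.range (m+1),
          C (if k + 1 = m ∧ t < m then c0 - e t else 0) * Pp (dseq e c0 t) k = 0 := by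
        apply Finset.sum_eq_zero
        intro k _
        rw [if_neg (by omega)]; simp
      rw [h2, add_zero, Pp_dseq_low e c0 (by omega : m ≤ t+1), Pp_dseq_low e c0 (by omega : m ≤ t)]

lemma SaeRel_G (a : ℕ → ℝ) (c0 : ℝ) (t : ℕ) :
    SaeRel (dseq a c0 (t+1)) (dseq a c0 t) (Gmat a c0 t) := by
  constructor
  · intro m k h
    rw [Gmat, if_neg (by omega), if_neg (by omega)]
  · intro m
    have hbase : ∀ k, (∏ i ∈ Finset.range k, (X - C (dseq a c0 (t+1) i))) = Pp (dseq a c0 (t+1)) k :=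
      fun k => rfl
    have hLHS : ∏ i ∈ Finset.range m, (X - C (dseq a c0 t i)) = Pp (dseq a c0 t) m := rfl
    simp only [hLHS, hbase]
    by_cases ht : t < m
    · obtain ⟨s, rfl⟩ : ∃ s, m = t + 1 + s := ⟨m - t - 1, by omega⟩
      set u := a t - c0 with hu
      have step1 : ∑ k ∈ Finset.range (t+1+s+1), C (Gmat a c0 t (t+1+s) k) * Pp (dseq a c0 (t+1)) k
          = ∑ k ∈ Finset.Ico t (t+1+s+1), C (Gmat a c0 t (t+1+s) k) * Pp (dseq a c0 (t+1)) k := by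
        have hsub : Finset.Ico t (t+1+s+1) ⊆ Finset.range (t+1+s+1) := by
          intro k hk
          simp only [Finset.mem_Ico] at hk
          simp only [Finset.mem_range]
          omega
        apply (Finset.sum_subset hsub ?_).symm
        intro k hk hk2
        simp only [Finset.mem_range] at hk
        simp only [Finset.mem_Ico] at hk2
        rw [Gmat, if_neg (by omega), if_neg (by omega)]
        simp
      have step2 : ∑ k ∈ Finset.Ico t (t+1+s+1), C (Gmat a c0 t (t+1+s) k) * Pp (dseq a c0 (t+1)) k
          = ∑ i ∈ Finset.range (s+2), C (Gmat a c0 t (t+1+s) (t+i)) * Pp (dseq a c0 (t+1)) (t+i) := by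
        rw [Finset.sum_Ico_eq_sum_range]
        have hnum : t+1+s+1-t = s+2 := by omega
        rw [hnum]
      have step3 : ∑ i ∈ Finset.range (s+2), C (Gmat a c0 t (t+1+s) (t+i)) * Pp (dseq a c0 (t+1)) (t+i)
          = (∑ i ∈ Finset.range (s+1), C (Gmat a c0 t (t+1+s) (t+(i+1))) * Pp (dseq a c0 (t+1)) (t+(i+1)))
            + C (Gmat a c0 t (t+1+s) (t+0)) * Pp (dseq a c0 (t+1)) (t+0) :=
        Finset.sum_range_succ' _ (s+1)
      have hg0 : Gmat a c0 t (t+1+s) (t+0) = u^(s+1) := by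
        rw [Gmat, if_neg (by omega), if_pos (by omega)]
        congr 1
        omega
      have hPp0 : Pp (dseq a c0 (t+1)) (t+0) = Pp a t := Pp_dseq_low a c0 (by omega)
      have hgi : ∀ i ∈ Finset.range (s+1), C (Gmat a c0 t (t+1+s) (t+(i+1))) * Pp (dseq a c0 (t+1)) (t+(i+1))
          = C (u^(s-i)) * ((Pp a t * (X - C (a t))) * (X - C c0)^i) := by
        intro i hi
        have hi' : i < s + 1 := Finset.mem_range.1 hi
        have hg : Gmat a c0 t (t+1+s) (t+(i+1)) = u^(s-i) := by
          by_cases h : i = s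
          · subst h
            rw [Gmat, if_pos (by omega)]
            simp
          · rw [Gmat, if_neg (by omega), if_pos (by constructor <;> omega)]
            congr 1
            omega
        have hP : Pp (dseq a c0 (t+1)) (t+(i+1)) = (Pp a t * (X - C (a t))) * (X - C c0)^i := by
          rw [show t+(i+1) = (t+1)+i by omega, Pp_dseq_add]
          rw [Pp, Finset.prod_range_succ, ← Pp]
        rw [hg, hP]
      rw [step1, step2, step3, hg0, hPp0, Finset.sum_congr rfl hgi]
      have eL : Pp (dseq a c0 t) (t+1+s) = Pp a t * (X - C c0)^(s+1) := by
        rw [show t+1+s = t+(s+1) by omega, Pp_dseq_add]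
      rw [eL, geom_expand (a t) c0 (s+1)]
      simp only [Nat.add_sub_cancel]
      rw [mul_add, Finset.mul_sum]
      rw [add_comm]
      refine congrArg₂ (· + ·) ?_ ?_
      · apply Finset.sum_congr rfl
        intro i _
        ring
      · ring
    · -- m ≤ t
      have : ∀ k ∈ Finset.range (m+1), C (Gmat a c0 t m k) * Pp (dseq a c0 (t+1)) k
          = if k = m then Pp (dseq a c0 (t+1)) k else 0 := by
        intro k hk
        by_cases h : k = m
        · rw [Gmat, if_pos h, h]; simp
        · rw [Gmat, if_neg h, if_neg (by simp at hk; omega)]; simp [h]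
      rw [Finset.sum_congr rfl this, Finset.sum_ite_eq' (Finset.range (m+1)) m]
      rw [if_pos (by simp), Pp_dseq_low a c0 (by omega), Pp_dseq_low a c0 (by omega)]


noncomputable def opF (f : ℕ → ℝ) (Θ : ℕ → ℕ → ℝ) : ℕ → ℕ → ℝ :=
  fun m k => Θ m k + f k * Θ m (k+1)

noncomputable def opG (t : ℕ) (u : ℝ) (Θ : ℕ → ℕ → ℝ) : ℕ → ℕ → ℝ :=
  fun m k => if k < t then Θ m k else ∑ j ∈ Finset.Ico k (m+1), u^(j-k) * Θ m j

lemma tri_deltaM : tri (fun m k => if m = k then (1:ℝ) else 0) := by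
  intro m k h
  simp only []
  rw [if_neg (by omega)]

lemma tri_opF (f : ℕ → ℝ) (Θ : ℕ → ℕ → ℝ) (h : tri Θ) : tri (opF f Θ) := by
  intro m k hk
  rw [opF, h m k hk, h m (k+1) (by omega)]
  ring

lemma tri_opG (t : ℕ) (u : ℝ) (Θ : ℕ → ℕ → ℝ) (h : tri Θ) : tri (opG t u Θ) := by
  intro m k hk
  rw [opG]
  split
  · exact h m k hk
  · rw [Finset.Ico_eq_empty (by omega)]
    simp

lemma mulT_Fmat (e : ℕ → ℝ) (c0 : ℝ) (t : ℕ) (Θ : ℕ → ℕ → ℝ) (hΘ : tri Θ) :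
    mulT Θ (Fmat e c0 t) = opF (fun k => if t ≤ k then c0 - e t else 0) Θ := by
  funext m k
  rw [mulT, opF]
  have hsplit : ∀ j ∈ Finset.range (m+1), Θ m j * Fmat e c0 t j k
      = (if k = j then Θ m j else 0) + (if k + 1 = j ∧ t < j then Θ m j * (c0 - e t) else 0) := by
    intro j _
    rw [Fmat, mul_add]
    congr 1
    · by_cases h : k = j <;> simp [h]
    · by_cases h : k + 1 = j ∧ t < j <;> simp [h]
  rw [Finset.sum_congr rfl hsplit, Finset.sum_add_distrib]
  congr 1
  · rw [Finset.sum_ite_eq (Finset.range (m+1)) k]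
    by_cases h : k ∈ Finset.range (m+1)
    · rw [if_pos h]
    · rw [if_neg h, hΘ m k (by simp at h; omega)]
  · by_cases htk : t ≤ k
    · have : ∀ j ∈ Finset.range (m+1), (if k + 1 = j ∧ t < j then Θ m j * (c0 - e t) else 0)
          = if k + 1 = j then Θ m j * (c0 - e t) else 0 := by
        intro j _
        by_cases h : k + 1 = j
        · rw [if_pos ⟨h, by omega⟩, if_pos h]
        · rw [if_neg (by tauto), if_neg h]
      rw [Finset.sum_congr rfl this, Finset.sum_ite_eq (Finset.range (m+1)) (k+1)]
      rw [if_pos htk]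
      by_cases h : k + 1 ∈ Finset.range (m+1)
      · rw [if_pos h]; ring
      · rw [if_neg h, hΘ m (k+1) (by simp at h; omega)]; ring
    · rw [if_neg htk, Finset.sum_eq_zero]
      · ring
      · intro j _
        rw [if_neg (by omega)]

lemma mulT_Gmat (a : ℕ → ℝ) (c0 : ℝ) (t : ℕ) (Θ : ℕ → ℕ → ℝ) (hΘ : tri Θ) :
    mulT Θ (Gmat a c0 t) = opG t (a t - c0) Θ := by
  funext m k
  rw [mulT, opG]
  by_cases hkt : k < t
  · rw [if_pos hkt]
    have : ∀ j ∈ Finset.range (m+1), Θ m j * Gmat a c0 t j k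
        = if k = j then Θ m j else 0 := by
      intro j _
      by_cases h : k = j
      · rw [Gmat, if_pos h, mul_one, if_pos h]
      · rw [Gmat, if_neg h, if_neg (by omega), mul_zero, if_neg h]
    rw [Finset.sum_congr rfl this, Finset.sum_ite_eq (Finset.range (m+1)) k]
    by_cases h : k ∈ Finset.range (m+1)
    · rw [if_pos h]
    · rw [if_neg h, hΘ m k (by simp at h; omega)]
  · rw [if_neg hkt]
    have hterm : ∀ j ∈ Finset.range (m+1), Θ m j * Gmat a c0 t j k
        = if k ≤ j then (a t - c0)^(j-k) * Θ m j else 0 := by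
      intro j _
      by_cases h : k = j
      · rw [Gmat, if_pos h, mul_one, if_pos (by omega), h]
        simp
      · by_cases h2 : k ≤ j
        · rw [Gmat, if_neg h, if_pos (by omega), if_pos h2]
          ring
        · rw [Gmat, if_neg h, if_neg (by omega), mul_zero, if_neg h2]
    rw [Finset.sum_congr rfl hterm, ← Finset.sum_filter]
    congr 1
    ext j
    simp only [Finset.mem_filter, Finset.mem_range, Finset.mem_Ico]
    omega


lemma TN_deltaM : TotallyNonneg (fun m k => if m = k then (1:ℝ) else 0) := by
  intro p r c hr hc
  show 0 ≤ (Matrix.of fun i j => if r i = c j then (1:ℝ) else 0).det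
  by_cases hrc : ∀ i, r i = c i
  · have hone : (Matrix.of fun i j => if r i = c j then (1:ℝ) else 0) = 1 := by
      ext i j
      by_cases h : i = j
      · subst h
        simp [Matrix.one_apply, hrc i]
      · have hne : r i ≠ c j := by
          rcases lt_or_gt_of_ne h with hlt | hgt
          · have := hc hlt; rw [← hrc i] at this; omega
          · have := hc hgt; rw [← hrc i] at this; omega
        simp [Matrix.one_apply, h, hne]
    rw [hone, Matrix.det_one]
    norm_num
  · push_neg at hrc
    obtain ⟨i₀, hi₀⟩ := hrc
    rw [Matrix.det_apply]
    apply le_of_eq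
    symm
    apply Finset.sum_eq_zero
    intro σ _
    by_cases hσ : ∀ i, r (σ i) = c i
    · exfalso
      have hmono : StrictMono (σ : Fin p → Fin p) := by
        intro x y hxy
        have hcc : c x < c y := hc hxy
        rw [← hσ x, ← hσ y] at hcc
        exact hr.lt_iff_lt.mp hcc
      have hinv : StrictMono (⇑(σ⁻¹) : Fin p → Fin p) := by
        intro x y hxy
        rcases lt_trichotomy (σ⁻¹ x) (σ⁻¹ y) with hl | he | hg
        · exact hl
        · exfalso
          have hxy' : x = y := by
            have := congrArg σ he
            simpa using this
          subst hxy'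
          exact lt_irrefl _ hxy
        · exfalso
          have h2 := hmono hg
          simp only [Equiv.Perm.coe_inv, Equiv.apply_symm_apply] at h2
          exact absurd hxy (not_lt.2 h2.le)
      have hid : σ i₀ = i₀ := by
        have inst : WellFoundedLT (Fin p) := inferInstance
        have hle1 : i₀ ≤ σ i₀ := @StrictMono.le_apply (Fin p) _ inst _ hmono i₀
        have hle2 : σ i₀ ≤ σ⁻¹ (σ i₀) := @StrictMono.le_apply (Fin p) _ inst _ hinv (σ i₀)
        rw [show σ⁻¹ (σ i₀) = i₀ from σ.symm_apply_apply i₀] at hle2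
        exact le_antisymm hle2 hle1
      apply hi₀
      have := hσ i₀
      rwa [hid] at this
    · push_neg at hσ
      obtain ⟨i₁, h1⟩ := hσ
      have hz : (Matrix.of fun i j => if r i = c j then (1:ℝ) else 0) (σ i₁) i₁ = 0 := by
        simp [h1]
      have hprod : (∏ i, (Matrix.of fun i j => if r i = c j then (1:ℝ) else 0) (σ i) i) = 0 :=
        Finset.prod_eq_zero (Finset.mem_univ i₁) hz
      rw [hprod, smul_zero]

noncomputable def MF (Θ : ℕ → ℕ → ℝ) (f : ℕ → ℝ) {p : ℕ} (r : Fin p → ℕ)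
    (q : ℕ) (cols : Fin p → ℕ) : Matrix (Fin p) (Fin p) ℝ :=
  Matrix.of fun i j => if (j:ℕ) + q < p then Θ (r i) (cols j)
    else Θ (r i) (cols j) + f (cols j) * Θ (r i) (cols j + 1)

lemma TN_opF (f : ℕ → ℝ) (hf : ∀ k, 0 ≤ f k) (Θ : ℕ → ℕ → ℝ) (hTN : TotallyNonneg Θ) :
    TotallyNonneg (opF f Θ) := by
  intro p r c hr hc
  have claim : ∀ q, q ≤ p → ∀ cols : Fin p → ℕ,
      (∀ i j : Fin p, i < j → (j:ℕ) + q ≠ p → cols i < cols j) →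
      (∀ i j : Fin p, i < j → (j:ℕ) + q = p → cols i ≤ cols j) →
      0 ≤ (MF Θ f r q cols).det := by
    intro q
    induction q with
    | zero =>
      intro _ cols hm _
      have hmono : StrictMono cols := fun i j hij => hm i j hij (by omega)
      have hMat : MF Θ f r 0 cols = Matrix.of fun i j => Θ (r i) (cols j) := by
        ext i j
        rw [MF]
        simp only [Matrix.of_apply]
        rw [if_pos (by omega)]
      rw [hMat]
      exact hTN p r cols hr hmono
    | succ q ih =>
      intro hqp cols hm hj
      have hsp : p - (q+1) < p := by omega
      set s : ℕ := p - (q+1) with hs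
      set j₀ : Fin p := ⟨s, hsp⟩ with hj₀
      have hval : (j₀ : ℕ) = s := rfl
      set u : Fin p → ℝ := fun i => Θ (r i) (cols j₀) with hu
      set v : Fin p → ℝ := fun i => Θ (r i) (cols j₀ + 1) with hv
      have key : MF Θ f r (q+1) cols = (MF Θ f r q cols).updateCol j₀ (u + f (cols j₀) • v) := by
        ext i j
        rw [Matrix.updateCol_apply]
        by_cases h : j = j₀
        · subst h
          rw [if_pos rfl, MF]
          simp only [Matrix.of_apply]
          rw [if_neg (by omega)]
          simp [hu, hv]
        · rw [if_neg h, MF, MF]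
          simp only [Matrix.of_apply]
          have hvne : (j:ℕ) ≠ s := fun hh => h (Fin.ext hh)
          by_cases h2 : (j:ℕ) + q < p
          · by_cases h3 : (j:ℕ) + (q+1) < p
            · rw [if_pos h3, if_pos h2]
            · omega
          · rw [if_neg (by omega), if_neg h2]
      have hA : (MF Θ f r q cols).updateCol j₀ u = MF Θ f r q cols := by
        have : u = fun i => (MF Θ f r q cols) i j₀ := by
          funext i
          rw [MF]
          simp only [Matrix.of_apply]
          rw [if_pos (by omega)]
        rw [this, Matrix.updateCol_eq_self]
      have hB : (MF Θ f r q cols).updateCol j₀ v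
          = MF Θ f r q (Function.update cols j₀ (cols j₀ + 1)) := by
        ext i j
        rw [Matrix.updateCol_apply]
        by_cases h : j = j₀
        · subst h
          rw [if_pos rfl, MF]
          simp only [Matrix.of_apply]
          rw [if_pos (by omega), Function.update_self]
        · rw [if_neg h, MF, MF]
          simp only [Matrix.of_apply]
          rw [Function.update_of_ne h]
      have dA : 0 ≤ (MF Θ f r q cols).det := by
        by_cases hdup : ∃ i : Fin p, (i:ℕ) + 1 = s ∧ cols i = cols j₀
        · obtain ⟨i₁, hi1, hi2⟩ := hdup
          apply le_of_eq
          symm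
          apply Matrix.det_zero_of_column_eq (show i₁ ≠ j₀ by
            intro hh; rw [hh, hval] at hi1; omega)
          intro row
          rw [MF]
          simp only [Matrix.of_apply]
          rw [if_pos (by omega), if_pos (by omega), hi2]
        · push_neg at hdup
          apply ih (by omega) cols
          · intro i j hij hne
            by_cases hcase : (j:ℕ) + (q+1) = p
            · have hjj : j = j₀ := Fin.ext (by omega)
              subst hjj
              have hle : cols i ≤ cols j₀ := hj i j₀ hij (by omega)
              rcases Nat.lt_or_ge (cols i) (cols j₀) with hlt | hge
              · exact hlt
              · have heq : cols i = cols j₀ := le_antisymm hle hge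
                by_cases hi1 : (i:ℕ) + 1 = s
                · exact absurd heq (hdup i hi1)
                · exfalso
                  have hilt : (i:ℕ) < s := hij
                  have hs1 : s - 1 < p := by omega
                  have h1 : cols i < cols ⟨s-1, hs1⟩ :=
                    hm i ⟨s-1, hs1⟩ (by simp [Fin.lt_def]; omega) (by simp; omega)
                  have h2 : cols ⟨s-1, hs1⟩ ≤ cols j₀ :=
                    hj ⟨s-1, hs1⟩ j₀ (by simp [Fin.lt_def]; omega) (by simp [hval]; omega)
                  omega
            · exact hm i j hij (by omega)
          · intro i j hij hjq
            exact le_of_lt (hm i j hij (by omega))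
      have dB : 0 ≤ (MF Θ f r q (Function.update cols j₀ (cols j₀ + 1))).det := by
        apply ih (by omega) (Function.update cols j₀ (cols j₀ + 1))
        · intro i j hij hne
          by_cases hjj : j = j₀
          · subst hjj
            rw [Function.update_self, Function.update_of_ne (by
              intro hh; rw [hh] at hij; exact lt_irrefl _ hij)]
            have := hj i j₀ hij (by simp [hval]; omega)
            omega
          · rw [Function.update_of_ne hjj]
            by_cases hii : i = j₀
            · subst hii
              rw [Function.update_self]
              have hjgt : s < (j:ℕ) := hij
              have hjne : (j:ℕ) ≠ s + 1 := by
                intro hh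
                apply hne
                omega
              have hs1 : s + 1 < p := by omega
              have h1 : cols j₀ < cols ⟨s+1, hs1⟩ :=
                hm j₀ ⟨s+1, hs1⟩ (by simp [Fin.lt_def, hval]) (by simp; omega)
              have h2 : cols ⟨s+1, hs1⟩ < cols j :=
                hm ⟨s+1, hs1⟩ j (by simp [Fin.lt_def]; omega) (by omega)
              omega
            · rw [Function.update_of_ne hii]
              apply hm i j hij
              intro hh
              apply hjj
              apply Fin.ext
              omega
        · intro i j hij hjq
          have hjne : j ≠ j₀ := by
            intro hh
            rw [hh] at hjq
            simp [hval] at hjq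
            omega
          rw [Function.update_of_ne hjne]
          by_cases hii : i = j₀
          · subst hii
            rw [Function.update_self]
            have : cols j₀ < cols j := hm j₀ j hij (by omega)
            omega
          · rw [Function.update_of_ne hii]
            exact le_of_lt (hm i j hij (by omega))
      rw [key, Matrix.det_updateCol_add, Matrix.det_updateCol_smul, hA, hB]
      exact add_nonneg dA (mul_nonneg (hf _) dB)
  have happ := claim p (le_refl p) c
    (fun i j hij _ => hc hij)
    (fun i j hij hjp => by
      exfalso
      have : (j:ℕ) = 0 := by omega
      have : (i:ℕ) < 0 := by
        have := hij
        omega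
      omega)
  have hMat : MF Θ f r p c = Matrix.of fun i j => opF f Θ (r i) (c j) := by
    ext i j
    simp only [MF, opF, Matrix.of_apply]
    rw [if_neg (by omega)]
  rwa [hMat] at happ






noncomputable def MG (Θ : ℕ → ℕ → ℝ) (t : ℕ) (u : ℝ) (R : ℕ) {p : ℕ} (r : Fin p → ℕ)
    (q : ℕ) (cols : Fin p → ℕ) : Matrix (Fin p) (Fin p) ℝ :=
  Matrix.of fun i j => if (j:ℕ) + q < p then Θ (r i) (cols j)
    else (if cols j < t then Θ (r i) (cols j)
          else ∑ jj ∈ Finset.Ico (cols j) (R+2), u^(jj - cols j) * Θ (r i) jj)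

lemma TN_opG (t : ℕ) (u : ℝ) (hu : 0 ≤ u) (Θ : ℕ → ℕ → ℝ) (htri : tri Θ)
    (hTN : TotallyNonneg Θ) : TotallyNonneg (opG t u Θ) := by
  intro p r c hr hc
  set R : ℕ := Finset.univ.sup (fun i : Fin p => r i) with hR
  have hrR : ∀ i, r i ≤ R := fun i => Finset.le_sup (Finset.mem_univ i)
  have claim : ∀ q, q ≤ p → ∀ cols : Fin p → ℕ, StrictMono cols →
      0 ≤ (MG Θ t u R r q cols).det := by
    intro q
    induction q with
    | zero =>
      intro _ cols hmono
      have hMat : MG Θ t u R r 0 cols = Matrix.of fun i j => Θ (r i) (cols j) := by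
        ext i j
        rw [MG]
        simp only [Matrix.of_apply]
        rw [if_pos (by omega)]
      rw [hMat]
      exact hTN p r cols hr hmono
    | succ q ih =>
      intro hqp
      have hsp : p - (q+1) < p := by omega
      set s : ℕ := p - (q+1) with hs
      set j₀ : Fin p := ⟨s, hsp⟩ with hj₀
      have hval : (j₀ : ℕ) = s := rfl
      have hzero : ∀ cols : Fin p → ℕ, R + 1 ≤ cols j₀ → (MG Θ t u R r (q+1) cols).det = 0 := by
        intro cols hcol
        apply Matrix.det_eq_zero_of_column_eq_zero j₀
        intro i
        rw [MG]
        simp only [Matrix.of_apply]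
        rw [if_neg (by omega)]
        have hri := hrR i
        by_cases h : cols j₀ < t
        · rw [if_pos h]
          exact htri _ _ (by omega)
        · rw [if_neg h]
          apply Finset.sum_eq_zero
          intro jj hjj
          simp only [Finset.mem_Ico] at hjj
          rw [htri (r i) jj (by omega), mul_zero]
      have inner : ∀ D : ℕ, ∀ cols : Fin p → ℕ, StrictMono cols →
          R + 2 ≤ cols j₀ + D → 0 ≤ (MG Θ t u R r (q+1) cols).det := by
        intro D
        induction D with
        | zero =>
          intro cols hmono hD
          rw [hzero cols (by omega)]
        | succ D ihD =>
          intro cols hmono hD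
          by_cases hd1 : R + 1 ≤ cols j₀
          · rw [hzero cols hd1]
          · by_cases hd2 : cols j₀ < t
            · have hMat : MG Θ t u R r (q+1) cols = MG Θ t u R r q cols := by
                ext i j
                rw [MG, MG]
                simp only [Matrix.of_apply]
                by_cases h : j = j₀
                · subst h
                  rw [if_neg (show ¬((j₀:ℕ) + (q+1) < p) by omega), if_pos hd2,
                    if_pos (show (j₀:ℕ) + q < p by omega)]
                · have hvne : (j:ℕ) ≠ s := fun hh => h (Fin.ext hh)
                  have hcond : ((j:ℕ) + (q+1) < p) ↔ ((j:ℕ) + q < p) := by omega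
                  simp only [hcond]
              rw [hMat]
              exact ih (by omega) cols hmono
            · -- expand: t ≤ cols j₀ ≤ R
              set d : ℕ := cols j₀ with hd
              set w1 : Fin p → ℝ := fun i => Θ (r i) d with hw1
              set w2 : Fin p → ℝ :=
                fun i => ∑ jj ∈ Finset.Ico (d+1) (R+2), u^(jj - (d+1)) * Θ (r i) jj with hw2
              have key : MG Θ t u R r (q+1) cols
                  = (MG Θ t u R r q cols).updateCol j₀ (w1 + u • w2) := by
                ext i j
                rw [Matrix.updateCol_apply]
                by_cases h : j = j₀
                · subst h
                  rw [if_pos rfl, MG]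
                  simp only [Matrix.of_apply]
                  rw [if_neg (by omega), if_neg (by omega)]
                  rw [Finset.sum_eq_sum_Ico_succ_bot (by omega : d < R + 2)]
                  have hterm : ∀ jj ∈ Finset.Ico (d+1) (R+2),
                      u^(jj - d) * Θ (r i) jj = u * (u^(jj - (d+1)) * Θ (r i) jj) := by
                    intro jj hjj
                    simp only [Finset.mem_Ico] at hjj
                    rw [show jj - d = (jj - (d+1)) + 1 by omega, pow_succ]
                    ring
                  rw [Finset.sum_congr rfl hterm, ← Finset.mul_sum]
                  simp only [Pi.add_apply, Pi.smul_apply, smul_eq_mul, hw1, hw2]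
                  rw [Nat.sub_self, pow_zero, one_mul]
                · rw [if_neg h]
                  have hvne : (j:ℕ) ≠ s := fun hh => h (Fin.ext hh)
                  have hcond : ((j:ℕ) + (q+1) < p) ↔ ((j:ℕ) + q < p) := by omega
                  simp only [MG, Matrix.of_apply, hcond]
              have hA : (MG Θ t u R r q cols).updateCol j₀ w1 = MG Θ t u R r q cols := by
                have hcolval : w1 = fun i => (MG Θ t u R r q cols) i j₀ := by
                  funext i
                  rw [MG]
                  simp only [Matrix.of_apply]
                  rw [if_pos (by omega)]
                rw [hcolval, Matrix.updateCol_eq_self]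
              have hB : (MG Θ t u R r q cols).updateCol j₀ w2
                  = MG Θ t u R r (q+1) (Function.update cols j₀ (d+1)) := by
                ext i j
                rw [Matrix.updateCol_apply]
                by_cases h : j = j₀
                · subst h
                  rw [if_pos rfl, MG]
                  simp only [Matrix.of_apply]
                  rw [if_neg (by omega), Function.update_self, if_neg (by omega)]
                · rw [if_neg h]
                  have hvne : (j:ℕ) ≠ s := fun hh => h (Fin.ext hh)
                  have hcond : ((j:ℕ) + (q+1) < p) ↔ ((j:ℕ) + q < p) := by omega
                  simp only [MG, Matrix.of_apply, hcond, Function.update_of_ne h]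
              have dA : 0 ≤ (MG Θ t u R r q cols).det := ih (by omega) cols hmono
              have dB : 0 ≤ (MG Θ t u R r (q+1) (Function.update cols j₀ (d+1))).det := by
                by_cases hdup : ∃ j : Fin p, (j:ℕ) = s + 1 ∧ cols j = d + 1
                · obtain ⟨j₁, hj1, hj2⟩ := hdup
                  apply le_of_eq
                  symm
                  apply Matrix.det_zero_of_column_eq (show j₀ ≠ j₁ by
                    intro hh
                    have : (j₀:ℕ) = (j₁:ℕ) := by rw [hh]
                    omega)
                  intro row
                  rw [MG]
                  simp only [Matrix.of_apply]
                  rw [Function.update_self, Function.update_of_ne (by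
                    intro hh
                    have : (j₁:ℕ) = (j₀:ℕ) := by rw [hh]
                    omega), hj2]
                  rw [if_neg (show ¬((j₀:ℕ) + (q+1) < p) by omega),
                    if_neg (show ¬((j₁:ℕ) + (q+1) < p) by omega)]
                · apply ihD (Function.update cols j₀ (d+1))
                  · intro i j hij
                    by_cases hjj : j = j₀
                    · subst hjj
                      rw [Function.update_self,
                        Function.update_of_ne (by
                          intro hh; rw [hh] at hij; exact lt_irrefl _ hij)]
                      have := hmono hij
                      omega
                    · rw [Function.update_of_ne hjj]
                      by_cases hii : i = j₀
                      · subst hii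
                        rw [Function.update_self]
                        have hjgt : s < (j:ℕ) := hij
                        by_cases hcase : (j:ℕ) = s + 1
                        · have hne : cols j ≠ d + 1 := by
                            intro hh
                            exact hdup ⟨j, hcase, hh⟩
                          have := hmono hij
                          omega
                        · have hs1 : s + 1 < p := by
                            have := j.isLt
                            omega
                          have h1 : cols j₀ < cols ⟨s+1, hs1⟩ :=
                            hmono (by rw [Fin.lt_def]; simp only [Fin.val_mk]; omega)
                          have h2 : cols ⟨s+1, hs1⟩ < cols j :=
                            hmono (by rw [Fin.lt_def]; simp only [Fin.val_mk]; omega)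
                          omega
                      · rw [Function.update_of_ne hii]
                        exact hmono hij
                  · rw [Function.update_self]
                    omega
              rw [key, Matrix.det_updateCol_add, Matrix.det_updateCol_smul, hA, hB]
              exact add_nonneg dA (mul_nonneg hu dB)
      exact fun cols hmono => inner (R+2) cols hmono (by omega)
  have happ := claim p (le_refl p) c hc
  have hMat : MG Θ t u R r p c = Matrix.of fun i j => opG t u Θ (r i) (c j) := by
    ext i j
    simp only [MG, opG, Matrix.of_apply]
    rw [if_neg (by omega)]
    by_cases h : c j < t
    · rw [if_pos h, if_pos h]
    · rw [if_neg h, if_neg h]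
      apply (Finset.sum_subset (Finset.Ico_subset_Ico le_rfl (by
        have := hrR i
        omega)) ?_).symm
      intro jj hjj hjj2
      simp only [Finset.mem_Ico] at hjj hjj2
      rw [htri (r i) jj (by omega), mul_zero]
  rwa [hMat] at happ


end Stmt12Aux

open Stmt12Aux in
theorem stmt12 (a e : ℕ → ℝ) (h : ∀ i j : ℕ, e j ≤ a i)
    (S : ℕ → ℕ → ℝ) (hS : SaeRel a e S) :
    TotallyNonneg S := by
  intro p r c hr hc
  by_cases hp : p = 0
  · subst hp
    rw [Matrix.det_fin_zero]
    norm_num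
  · obtain ⟨p', rfl⟩ : ∃ p', p = p' + 1 := ⟨p - 1, by omega⟩
    set iL : Fin (p'+1) := Fin.last p' with hiL
    set N : ℕ := max (r iL) (c iL) + 1 with hN
    have hrN : ∀ i, r i < N := fun i => by
      have : r i ≤ r iL := hr.monotone (Fin.le_last i)
      omega
    have hcN : ∀ i, c i < N := fun i => by
      have : c i ≤ c iL := hc.monotone (Fin.le_last i)
      omega
    have hNne : (Finset.range N).Nonempty := Finset.nonempty_range_iff.2 (by omega)
    set c0 : ℝ := (Finset.range N).sup' hNne e with hc0
    have hec0 : ∀ j, j < N → e j ≤ c0 := fun j hj => Finset.le_sup' e (Finset.mem_range.2 hj)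
    have hc0a : ∀ i, c0 ≤ a i := fun i => Finset.sup'_le _ _ (fun j _ => h i j)
    have chainF : ∀ s : ℕ, s ≤ N → ∃ Θ, SaeRel (dseq e c0 (N - s)) (dseq e c0 N) Θ ∧
        TotallyNonneg Θ ∧ tri Θ := by
      intro s
      induction s with
      | zero =>
        intro _
        refine ⟨deltaM, ?_, TN_deltaM, tri_deltaM⟩
        rw [Nat.sub_zero]
        exact SaeRel_delta _
      | succ s ih =>
        intro hsN
        obtain ⟨Θ, hSae, hTN, htri⟩ := ih (by omega)
        have htt : N - s = (N - (s+1)) + 1 := by omega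
        rw [htt] at hSae
        refine ⟨mulT Θ (Fmat e c0 (N - (s+1))),
          SaeRel_comp _ _ _ _ _ (SaeRel_F e c0 (N - (s+1))) hSae, ?_, ?_⟩
        · rw [mulT_Fmat e c0 (N - (s+1)) Θ htri]
          apply TN_opF _ ?_ Θ hTN
          intro k
          split
          · have := hec0 (N - (s+1)) (by omega)
            linarith
          · exact le_refl 0
        · rw [mulT_Fmat e c0 (N - (s+1)) Θ htri]
          exact tri_opF _ _ htri
    obtain ⟨Θ₀, hSae0, hTN0, htri0⟩ := chainF N (le_refl N)
    rw [Nat.sub_self] at hSae0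
    have hd0 : dseq e c0 0 = dseq a c0 0 := by
      funext i
      simp only [dseq]
      rw [if_neg (by omega), if_neg (by omega)]
    rw [hd0] at hSae0
    have chainG : ∀ t : ℕ, t ≤ N → ∃ Θ, SaeRel (dseq a c0 t) (dseq e c0 N) Θ ∧
        TotallyNonneg Θ ∧ tri Θ := by
      intro t
      induction t with
      | zero => intro _; exact ⟨Θ₀, hSae0, hTN0, htri0⟩
      | succ t ih =>
        intro htN
        obtain ⟨Θ, hSae, hTN, htri⟩ := ih (by omega)
        refine ⟨mulT Θ (Gmat a c0 t),
          SaeRel_comp _ _ _ _ _ (SaeRel_G a c0 t) hSae, ?_, ?_⟩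
        · rw [mulT_Gmat a c0 t Θ htri]
          refine TN_opG t (a t - c0) ?_ Θ htri hTN
          have := hc0a t
          linarith
        · rw [mulT_Gmat a c0 t Θ htri]
          exact tri_opG _ _ _ htri
    obtain ⟨Θ, hSae, hTN, htri⟩ := chainG N (le_refl N)
    have hentry : ∀ m, m < N → ∀ k, S m k = Θ m k := by
      intro m hm k
      by_cases hk : k ≤ m
      · have hS2 : (∏ i ∈ Finset.range m, (X - C (e i)))
            = ∑ kk ∈ Finset.range (m+1), C (S m kk) * Pp a kk := hS.2 m
        have hSaeP : (∏ i ∈ Finset.range m, (X - C (dseq e c0 N i)))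
            = ∑ kk ∈ Finset.range (m+1), C (Θ m kk) * Pp (dseq a c0 N) kk := hSae.2 m
        have hM1 : (∑ kk ∈ Finset.range (m+1), C (S m kk) * Pp (dseq a c0 N) kk)
            = ∑ kk ∈ Finset.range (m+1), C (Θ m kk) * Pp (dseq a c0 N) kk := by
          have e1 : ∀ kk ∈ Finset.range (m+1), C (S m kk) * Pp (dseq a c0 N) kk
              = C (S m kk) * Pp a kk := by
            intro kk hkk
            rw [Pp_dseq_low a c0 (show kk ≤ N by
              have := Finset.mem_range.1 hkk
              omega)]
          have e2 : (∏ i ∈ Finset.range m, (X - C (e i)))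
              = ∏ i ∈ Finset.range m, (X - C (dseq e c0 N i)) := by
            apply Finset.prod_congr rfl
            intro i hi
            have := Finset.mem_range.1 hi
            simp only [dseq]
            rw [if_pos (by omega)]
          rw [Finset.sum_congr rfl e1, ← hS2, e2, hSaeP]
        exact row_uniq (dseq a c0 N) (m+1) (S m) (Θ m) hM1 k (by omega)
      · rw [hS.1 m k (by omega), hSae.1 m k (by omega)]
    have hfin : (Matrix.of fun i j => S (r i) (c j)) = Matrix.of fun i j => Θ (r i) (c j) := by
      ext i j
      exact hentry (r i) (hrN i) (c j)
    rw [hfin]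
    exact hTN _ r c hr hc
end

section
/- For an arbitrary real sequence a = (a_1, a_2, ...) and all j ≥ k ≥ 0, S^{a,0}(j,k) = h_{j-k}(a_1, ..., a_{k+1}), where 0 denotes the all-zeros sequence and h_d denotes the complete homogeneous symmetric polynomial of degree d; that is, in the expansion x^j = ∑_{k=0}^j c_k ∏_{i=1}^k (x - a_i) the coefficient c_k equals h_{j-k}(a_1, ..., a_{k+1}). -/
open Polynomial Finset

/-- The complete homogeneous symmetric polynomial `h_d(a_0, …, a_{t-1})`, written as
the sum over weakly increasing functions `Fin d → Fin t` (i.e. over degree-`d`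
monomials in `t` variables) of the corresponding products. -/
noncomputable def hsymm (a : ℕ → ℝ) (t d : ℕ) : ℝ :=
  ∑ f : {f : Fin d → Fin t // ∀ i j, i ≤ j → f i ≤ f j}, ∏ i : Fin d, a (f.1 i : ℕ)

lemma hsymm_zero (a : ℕ → ℝ) (t : ℕ) : hsymm a t 0 = 1 := by
  letI : Unique {f : Fin 0 → Fin t // ∀ i j, i ≤ j → f i ≤ f j} :=
    ⟨⟨⟨fun i => i.elim0, fun i => i.elim0⟩⟩, fun x => Subtype.ext (funext fun i => i.elim0)⟩
  simp [hsymm]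

lemma hsymm_zero_vars (a : ℕ → ℝ) (d : ℕ) : hsymm a 0 (d+1) = 0 := by
  letI : IsEmpty {f : Fin (d+1) → Fin 0 // ∀ i j, i ≤ j → f i ≤ f j} :=
    ⟨fun f => (f.1 0).elim0⟩
  simp [hsymm]

lemma hsymm_rec (a : ℕ → ℝ) (t d : ℕ) :
    hsymm a (t+1) (d+1) = hsymm a t (d+1) + a t * hsymm a (t+1) d := by
  classical
  set A := {f : Fin (d+1) → Fin (t+1) // ∀ i j, i ≤ j → f i ≤ f j} with hA
  set B := {f : Fin (d+1) → Fin t // ∀ i j, i ≤ j → f i ≤ f j} with hB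
  set Cc := {f : Fin d → Fin (t+1) // ∀ i j, i ≤ j → f i ≤ f j} with hCc
  have hmono_snoc : ∀ (g : Cc) (i j : Fin (d+1)), i ≤ j →
      (Fin.snoc g.1 (Fin.last t) : Fin (d+1) → Fin (t+1)) i ≤
      (Fin.snoc g.1 (Fin.last t) : Fin (d+1) → Fin (t+1)) j := by
    intro g i j hij
    induction j using Fin.lastCases with
    | last =>
      simp only [Fin.snoc_last]
      exact Fin.le_last _
    | cast j' =>
      induction i using Fin.lastCases with
      | last =>
        exact absurd (lt_of_le_of_lt hij (Fin.castSucc_lt_last j')) (lt_irrefl _)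
      | cast i' =>
        simp only [Fin.snoc_castSucc]
        exact g.2 i' j' (by exact_mod_cast hij)
  have hne : ∀ (f : A), f.1 (Fin.last d) ≠ Fin.last t → ∀ i, f.1 i ≠ Fin.last t := by
    intro f hf i heq
    exact hf (le_antisymm (Fin.le_last _) (heq ▸ f.2 i (Fin.last d) (Fin.le_last i)))
  let e : B ⊕ Cc ≃ A :=
    { toFun := Sum.elim
        (fun f => ⟨fun i => (f.1 i).castSucc, fun i j hij => by
          simpa using f.2 i j hij⟩)
        (fun g => ⟨Fin.snoc g.1 (Fin.last t), hmono_snoc g⟩)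
      invFun := fun f =>
        if h : f.1 (Fin.last d) = Fin.last t then
          Sum.inr ⟨fun i => f.1 i.castSucc, fun i j hij => f.2 _ _ (by simpa using hij)⟩
        else
          Sum.inl ⟨fun i => (f.1 i).castPred (hne f h i), fun i j hij => by
            simpa [Fin.castPred_le_castPred_iff] using f.2 i j hij⟩
      left_inv := by
        rintro (f | g)
        · have hlt : Fin.castSucc (f.1 (Fin.last d)) ≠ Fin.last t :=
            Fin.ne_of_lt (Fin.castSucc_lt_last _)
          dsimp only [Sum.elim_inl]
          rw [dif_neg hlt]
          exact congrArg Sum.inl (Subtype.ext (funext fun i => by simp))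
        · dsimp only [Sum.elim_inr]
          rw [dif_pos (Fin.snoc_last _ _)]
          exact congrArg Sum.inr (Subtype.ext (funext fun i => by simp))
      right_inv := by
        intro f
        by_cases h : f.1 (Fin.last d) = Fin.last t
        · show Sum.elim _ _ (if h : _ then _ else _) = _
          rw [dif_pos h]
          dsimp only [Sum.elim_inr]
          refine Subtype.ext (funext fun i => ?_)
          induction i using Fin.lastCases with
          | last => simp [Fin.snoc_last, h.symm]
          | cast i' => simp [Fin.snoc_castSucc]
        · show Sum.elim _ _ (if h : _ then _ else _) = _
          rw [dif_neg h]
          dsimp only [Sum.elim_inl]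
          exact Subtype.ext (funext fun i => Fin.castSucc_castPred _ _) }
  have hsum := Equiv.sum_comp e (fun f : A => ∏ i : Fin (d+1), a (f.1 i : ℕ))
  have h1 : ∀ f : B, (∏ i : Fin (d+1), a ((e (Sum.inl f)).1 i : ℕ)) =
      ∏ i : Fin (d+1), a (f.1 i : ℕ) :=
    fun f => Finset.prod_congr rfl fun i _ => by simp [e]
  have h2 : ∀ g : Cc, (∏ i : Fin (d+1), a ((e (Sum.inr g)).1 i : ℕ)) =
      a t * ∏ i : Fin d, a (g.1 i : ℕ) := by
    intro g
    show ∏ i : Fin (d+1), a ((Fin.snoc g.1 (Fin.last t) : Fin (d+1) → Fin (t+1)) i : ℕ) = _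
    rw [Fin.prod_univ_castSucc]
    simp [mul_comm]
  rw [hsymm, ← hsum, Fintype.sum_sum_type, Fintype.sum_congr _ _ h1,
    Fintype.sum_congr _ _ h2, ← Finset.mul_sum]
  rfl

lemma Qmonic (a : ℕ → ℝ) (k : ℕ) : (∏ i ∈ Finset.range k, (X - C (a i))).Monic :=
  monic_prod_of_monic _ _ fun i _ => monic_X_sub_C _

lemma QnatDegree (a : ℕ → ℝ) (k : ℕ) :
    (∏ i ∈ Finset.range k, (X - C (a i))).natDegree = k := by
  rw [natDegree_prod_of_monic _ _ fun i _ => monic_X_sub_C _]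
  simp

lemma indep (P : ℕ → ℝ[X]) (hP : ∀ k, (P k).Monic) (hd : ∀ k, (P k).natDegree = k) :
    ∀ (n : ℕ) (c : ℕ → ℝ), (∑ k ∈ range n, C (c k) * P k) = 0 → ∀ k < n, c k = 0 := by
  intro n
  induction n with
  | zero => intro c _ k hk; omega
  | succ n ih =>
    intro c hsum k hk
    have hcoe : ∀ m < n, (C (c m) * P m).coeff n = 0 := by
      intro m hm
      apply coeff_eq_zero_of_natDegree_lt
      have h1 := natDegree_mul_le (p := C (c m)) (q := P m)
      simp only [natDegree_C, hd m, zero_add] at h1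
      omega
    have hn : c n = 0 := by
      have h0 := congrArg (fun p : ℝ[X] => p.coeff n) hsum
      simp only [finset_sum_coeff, coeff_zero] at h0
      rw [Finset.sum_range_succ,
        Finset.sum_eq_zero (fun m hm => hcoe m (mem_range.mp hm)), zero_add] at h0
      rw [coeff_C_mul] at h0
      have hPn : (P n).coeff n = 1 := by
        have := (hP n).leadingCoeff
        rwa [Polynomial.leadingCoeff, hd n] at this
      rw [hPn, mul_one] at h0
      exact h0
    rcases Nat.lt_or_ge k n with hk' | hk'
    · apply ih c _ k hk'
      rw [Finset.sum_range_succ, hn] at hsum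
      simpa using hsum
    · have : k = n := by omega
      rw [this]; exact hn

lemma cand (a : ℕ → ℝ) : ∀ m : ℕ, (X : ℝ[X])^m =
    ∑ k ∈ range (m+1), C (hsymm a (k+1) (m-k)) * ∏ i ∈ range k, (X - C (a i)) := by
  intro m
  induction m with
  | zero => simp [hsymm_zero]
  | succ m ih =>
    have key : ∀ k : ℕ, X * ∏ i ∈ range k, (X - C (a i)) =
        (∏ i ∈ range (k+1), (X - C (a i))) + C (a k) * ∏ i ∈ range k, (X - C (a i)) := by
      intro k
      rw [prod_range_succ]
      ring
    calc (X : ℝ[X])^(m+1) = X * X^m := by ring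
      _ = ∑ k ∈ range (m+1), C (hsymm a (k+1) (m-k)) * (X * ∏ i ∈ range k, (X - C (a i))) := by
          rw [ih, Finset.mul_sum]; apply Finset.sum_congr rfl; intros; ring
      _ = (∑ k ∈ range (m+1), C (hsymm a (k+1) (m-k)) * ∏ i ∈ range (k+1), (X - C (a i)))
          + ∑ k ∈ range (m+1), C (a k * hsymm a (k+1) (m-k)) * ∏ i ∈ range k, (X - C (a i)) := by
          rw [← Finset.sum_add_distrib]
          apply Finset.sum_congr rfl; intro k _
          rw [key k, C_mul]; ring
      _ = ∑ k ∈ range (m+2), C (hsymm a (k+1) (m+1-k)) * ∏ i ∈ range k, (X - C (a i)) := by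
          -- split target
          rw [Finset.sum_range_succ (n := m+1)]
          have step1 : ∀ k ∈ range (m+1), C (hsymm a (k+1) (m+1-k)) * ∏ i ∈ range k, (X - C (a i))
              = (C (hsymm a k (m-k+1)) + C (a k * hsymm a (k+1) (m-k))) * ∏ i ∈ range k, (X - C (a i)) := by
            intro k hk
            have hk' : k ≤ m := by simpa [Nat.lt_succ_iff] using hk
            have : m + 1 - k = (m - k) + 1 := by omega
            rw [this, hsymm_rec a k (m-k), C_add, C_mul]
          rw [Finset.sum_congr rfl step1]
          have expand : ∑ k ∈ range (m+1), (C (hsymm a k (m-k+1)) + C (a k * hsymm a (k+1) (m-k)))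
                * ∏ i ∈ range k, (X - C (a i))
              = (∑ k ∈ range (m+1), C (hsymm a k (m-k+1)) * ∏ i ∈ range k, (X - C (a i)))
                + ∑ k ∈ range (m+1), C (a k * hsymm a (k+1) (m-k)) * ∏ i ∈ range k, (X - C (a i)) := by
            rw [← Finset.sum_add_distrib]; apply Finset.sum_congr rfl; intros; ring
          rw [expand]
          rw [Finset.sum_range_succ (f := fun k => C (hsymm a (k+1) (m-k)) * ∏ i ∈ range (k+1), (X - C (a i)))]
          rw [Finset.sum_range_succ' (f := fun k => C (hsymm a k (m-k+1)) * ∏ i ∈ range k, (X - C (a i)))]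
          have inner : ∀ k ∈ range m,
              C (hsymm a (k+1) (m-(k+1)+1)) * ∏ i ∈ range (k+1), (X - C (a i))
              = C (hsymm a (k+1) (m-k)) * ∏ i ∈ range (k+1), (X - C (a i)) := by
            intro k hk
            have hk' : k < m := mem_range.mp hk
            have : m - (k+1) + 1 = m - k := by omega
            rw [this]
          rw [Finset.sum_congr rfl inner]
          have z : hsymm a 0 (m - 0 + 1) = 0 := by
            rw [Nat.sub_zero]; exact hsymm_zero_vars a m
          rw [z, Nat.sub_self, Nat.sub_self, hsymm_zero, hsymm_zero]
          simp
          ring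

/-- `S^{a,0}(j,k) = h_{j-k}(a_1, …, a_{k+1})`. -/
theorem stmt15 (a : ℕ → ℝ) (Sa0 : ℕ → ℕ → ℝ)
    (h : SaeRel a (fun _ => 0) Sa0) (j k : ℕ) (hkj : k ≤ j) :
    Sa0 j k = hsymm a (k + 1) (j - k) := by
  obtain ⟨-, hrel⟩ := h
  have h1 := hrel j
  have h0 : (∏ i ∈ Finset.range j, (X - C ((fun _ => (0:ℝ)) i))) = (X:ℝ[X])^j := by simp
  rw [h0] at h1
  have h2 : (X : ℝ[X])^j =
      ∑ k ∈ range (j+1), C (hsymm a (k+1) (j-k)) * ∏ i ∈ range k, (X - C (a i)) := cand a j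
  have hdiff : ∑ k ∈ range (j+1),
      C ((fun k => Sa0 j k - hsymm a (k+1) (j-k)) k) * ∏ i ∈ range k, (X - C (a i)) = 0 := by
    simp only [C_sub, sub_mul]
    rw [Finset.sum_sub_distrib, ← h1, ← h2, sub_self]
  have := indep (fun k => ∏ i ∈ range k, (X - C (a i))) (fun k => Qmonic a k)
    (fun k => QnatDegree a k) (j+1) _ hdiff k (by omega)
  exact sub_eq_zero.mp this
end

section
/- Let G be a chordal graph on n vertices with perfect elimination order v_1, ..., v_n, for 1 ≤ m ≤ n let G_m be the subgraph of G induced by v_1, ..., v_m, and for each i let e_i be the number of neighbors of v_i among v_1, ..., v_{i-1}. Then for every positive integer x and every 1 ≤ m ≤ n, the number of proper colorings of G_m using colors from a palette of x colors (colorings in which adjacent vertices receive distinct colors) equals ∏_{i=1}^m (x - e_i). -/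
/-- The ordering `0 < 1 < ⋯ < n-1` of the vertices of `G` is a perfect elimination
order: for each vertex `k`, its neighbors among the earlier vertices form a clique.
(A graph is chordal iff it admits a perfect elimination order.) -/
def IsPEO {n : ℕ} (G : SimpleGraph (Fin n)) : Prop :=
  ∀ k i j : Fin n, i < k → j < k → i ≠ j → G.Adj i k → G.Adj j k → G.Adj i j

/-- The number of neighbors of `v` among the earlier vertices. -/
noncomputable def earlierNbrs {n : ℕ} (G : SimpleGraph (Fin n)) (v : Fin n) : ℕ :=
  Nat.card {j : Fin n // j < v ∧ G.Adj j v}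

/-- The sequence `(e_1(G), …, e_n(G))` (0-indexed, extended by `0`), as reals. -/
noncomputable def eSeq {n : ℕ} (G : SimpleGraph (Fin n)) : ℕ → ℝ :=
  fun i => if h : i < n then (earlierNbrs G ⟨i, h⟩ : ℝ) else 0

open scoped Classical

section Aux

variable {n : ℕ} (G : SimpleGraph (Fin n)) (x m : ℕ)

abbrev PC (m : ℕ) := {c : {v : Fin n // (v : ℕ) < m} → Fin x //
    ∀ u w : {v : Fin n // (v : ℕ) < m}, G.Adj u.1 w.1 → c u ≠ c w}

def res : PC G x (m + 1) → PC G x m :=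
  fun c => ⟨fun v => c.1 ⟨v.1, Nat.lt_succ_of_lt v.2⟩,
    fun u w h => c.2 ⟨u.1, Nat.lt_succ_of_lt u.2⟩ ⟨w.1, Nat.lt_succ_of_lt w.2⟩ h⟩

def fiberEquiv (hm : m < n) (c : PC G x m) :
    {d : PC G x (m + 1) // res G x m d = c} ≃
    {a : Fin x // ∀ j : {v : Fin n // (v : ℕ) < m}, G.Adj j.1 ⟨m, hm⟩ → a ≠ c.1 j} where
  toFun d := ⟨d.1.1 ⟨⟨m, hm⟩, Nat.lt_succ_self m⟩, by
    intro j hj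
    have h1 := d.1.2 ⟨⟨m, hm⟩, Nat.lt_succ_self m⟩ ⟨j.1, Nat.lt_succ_of_lt j.2⟩ hj.symm
    have h2 := congrFun (congrArg Subtype.val d.2) j
    rw [← h2]; exact h1⟩
  invFun a := ⟨⟨fun v => if h : (v.1 : ℕ) < m then c.1 ⟨v.1, h⟩ else a.1, by
      intro u w hadj
      by_cases hu : (u.1 : ℕ) < m <;> by_cases hw : (w.1 : ℕ) < m
      · simp only [dif_pos hu, dif_pos hw]; exact c.2 ⟨u.1, hu⟩ ⟨w.1, hw⟩ hadj
      · simp only [dif_pos hu, dif_neg hw]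
        have hw1 : w.1 = ⟨m, hm⟩ :=
          Fin.ext (Nat.le_antisymm (Nat.lt_succ_iff.mp w.2) (not_lt.mp hw))
        exact (a.2 ⟨u.1, hu⟩ (hw1 ▸ hadj)).symm
      · simp only [dif_neg hu, dif_pos hw]
        have hu1 : u.1 = ⟨m, hm⟩ :=
          Fin.ext (Nat.le_antisymm (Nat.lt_succ_iff.mp u.2) (not_lt.mp hu))
        exact a.2 ⟨w.1, hw⟩ ((hu1 ▸ hadj).symm)
      · have hw1 : w.1 = ⟨m, hm⟩ :=
          Fin.ext (Nat.le_antisymm (Nat.lt_succ_iff.mp w.2) (not_lt.mp hw))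
        have hu1 : u.1 = ⟨m, hm⟩ :=
          Fin.ext (Nat.le_antisymm (Nat.lt_succ_iff.mp u.2) (not_lt.mp hu))
        rw [hu1, hw1] at hadj
        exact absurd hadj (G.irrefl)⟩,
    Subtype.ext (funext fun v => dif_pos v.2)⟩
  right_inv a := Subtype.ext (dif_neg (lt_irrefl m))
  left_inv d := by
    apply Subtype.ext; apply Subtype.ext; funext v
    by_cases h : (v.1 : ℕ) < m
    · simp only [dif_pos h]
      exact (congrFun (congrArg Subtype.val d.2) ⟨v.1, h⟩).symm
    · simp only [dif_neg h]
      have hv : v = ⟨⟨m, hm⟩, Nat.lt_succ_self m⟩ :=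
        Subtype.ext (Fin.ext (Nat.le_antisymm (Nat.lt_succ_iff.mp v.2) (not_lt.mp h)))
      rw [hv]

def nbrEquiv (hm : m < n) :
    {j : {v : Fin n // (v : ℕ) < m} // G.Adj j.1 ⟨m, hm⟩} ≃
    {j : Fin n // j < ⟨m, hm⟩ ∧ G.Adj j ⟨m, hm⟩} where
  toFun j := ⟨j.1.1, j.1.2, j.2⟩
  invFun j := ⟨⟨j.1, j.2.1⟩, j.2.2⟩
  left_inv _ := rfl
  right_inv _ := rfl

lemma card_cond (hG : IsPEO G) (hm : m < n) (c : PC G x m) :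
    Nat.card {a : Fin x //
        ∀ j : {v : Fin n // (v : ℕ) < m}, G.Adj j.1 ⟨m, hm⟩ → a ≠ c.1 j} =
      x - earlierNbrs G ⟨m, hm⟩ := by
  classical
  set N : Finset {v : Fin n // (v : ℕ) < m} :=
    Finset.univ.filter (fun j => G.Adj j.1 ⟨m, hm⟩) with hNdef
  set T : Finset (Fin x) := N.image c.1 with hTdef
  have hinj : Set.InjOn c.1 N := by
    intro j hj k hk hjk
    by_contra hne
    have hne1 : j.1 ≠ k.1 := fun h => hne (Subtype.ext h)
    have hja : G.Adj j.1 ⟨m, hm⟩ := (Finset.mem_filter.mp hj).2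
    have hka : G.Adj k.1 ⟨m, hm⟩ := (Finset.mem_filter.mp hk).2
    have hadj : G.Adj j.1 k.1 := hG ⟨m, hm⟩ j.1 k.1 j.2 k.2 hne1 hja hka
    exact c.2 j k hadj hjk
  have hTN : T.card = N.card := Finset.card_image_of_injOn hinj
  have hN : earlierNbrs G ⟨m, hm⟩ = N.card := by
    rw [earlierNbrs, ← Nat.card_eq_finsetCard]
    exact Nat.card_congr ((nbrEquiv G m hm).symm.trans
      (Equiv.subtypeEquivRight (by intro j; simp [hNdef])))
  have hiff : ∀ a : Fin x,
      (∀ j : {v : Fin n // (v : ℕ) < m}, G.Adj j.1 ⟨m, hm⟩ → a ≠ c.1 j) ↔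
        a ∈ Finset.univ \ T := by
    intro a
    simp only [Finset.mem_sdiff, Finset.mem_univ, true_and, hTdef, hNdef, Finset.mem_image,
      Finset.mem_filter, not_exists, not_and]
    constructor
    · intro h j hj he; exact h j hj he.symm
    · intro h j hj he; exact h j hj he.symm
  calc Nat.card {a : Fin x //
        ∀ j : {v : Fin n // (v : ℕ) < m}, G.Adj j.1 ⟨m, hm⟩ → a ≠ c.1 j}
      = Nat.card {a : Fin x // a ∈ Finset.univ \ T} :=
        Nat.card_congr (Equiv.subtypeEquivRight hiff)
    _ = (Finset.univ \ T).card := Nat.card_eq_finsetCard _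
    _ = x - earlierNbrs G ⟨m, hm⟩ := by
        rw [Finset.card_sdiff_of_subset (Finset.subset_univ T), Finset.card_univ, Fintype.card_fin,
          hTN, ← hN]


lemma e_le (hG : IsPEO G) (hm : m < n) (c : PC G x m) : earlierNbrs G ⟨m, hm⟩ ≤ x := by
  rw [earlierNbrs, Nat.card_eq_fintype_card]
  have hinj : Function.Injective
      (fun j : {j : Fin n // j < ⟨m, hm⟩ ∧ G.Adj j ⟨m, hm⟩} => c.1 ⟨j.1, j.2.1⟩) := by
    intro j k hjk
    by_contra hne
    have hne1 : j.1 ≠ k.1 := fun h => hne (Subtype.ext h)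
    have hadj : G.Adj j.1 k.1 := hG ⟨m, hm⟩ j.1 k.1 j.2.1 k.2.1 hne1 j.2.2 k.2.2
    exact c.2 ⟨j.1, j.2.1⟩ ⟨k.1, k.2.1⟩ hadj hjk
  simpa using Fintype.card_le_of_injective _ hinj

set_option maxHeartbeats 1000000 in
lemma card_step (hG : IsPEO G) (hm : m < n) :
    Nat.card (PC G x (m + 1)) = Nat.card (PC G x m) * (x - earlierNbrs G ⟨m, hm⟩) := by
  rw [Nat.card_eq_fintype_card,
    ← Fintype.card_congr (Equiv.sigmaFiberEquiv (res G x m)), Fintype.card_sigma]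
  have h : ∀ c : PC G x m, Fintype.card {d // res G x m d = c}
      = x - earlierNbrs G ⟨m, hm⟩ := fun c => by
    rw [Fintype.card_eq_nat_card]
    exact (Nat.card_congr (fiberEquiv G x m hm c)).trans (card_cond G x m hG hm c)
  rw [Finset.sum_congr rfl (fun c _ => h c), Finset.sum_const, smul_eq_mul,
    Finset.card_univ, Nat.card_eq_fintype_card]


lemma main_aux (hG : IsPEO G) : ∀ m, m ≤ n →
    (Nat.card (PC G x m) : ℝ) = ∏ i ∈ Finset.range m, ((x : ℝ) - eSeq G i) := by
  intro m
  induction m with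
  | zero =>
    intro _
    have h1 : Nat.card (PC G x 0) = 1 := by
      rw [Nat.card_eq_one_iff_unique]
      constructor
      · exact ⟨fun a b => Subtype.ext (funext fun v => absurd v.2 (Nat.not_lt_zero _))⟩
      · exact ⟨⟨fun v => absurd v.2 (Nat.not_lt_zero _),
          fun u => absurd u.2 (Nat.not_lt_zero _)⟩⟩
    rw [h1]; simp
  | succ m ih =>
    intro hm
    have hmn : m < n := hm
    rw [card_step G x m hG hmn, Finset.prod_range_succ, ← ih (le_of_lt hmn)]
    have he : eSeq G m = (earlierNbrs G ⟨m, hmn⟩ : ℝ) := by rw [eSeq]; exact dif_pos hmn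
    rw [he]
    rcases Nat.eq_zero_or_pos (Nat.card (PC G x m)) with h0 | hpos
    · rw [h0]; simp
    · have hne : Nonempty (PC G x m) := (Nat.card_pos_iff.mp hpos).1
      have hle := e_le G x m hG hmn hne.some
      rw [Nat.cast_mul, Nat.cast_sub hle]

end Aux

/-- For a chordal graph `G` with perfect elimination order `v_1, …, v_n`, the number of
proper colorings of the induced subgraph `G_m` (on the first `m` vertices) with a
palette of `x` colors is `∏_{i=1}^m (x - e_i)`. -/
theorem stmt17 {n : ℕ} (G : SimpleGraph (Fin n)) (hG : IsPEO G)
    (x : ℕ) (hx : 0 < x) (m : ℕ) (hm1 : 1 ≤ m) (hmn : m ≤ n) :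
    (Nat.card {c : {v : Fin n // (v : ℕ) < m} → Fin x //
        ∀ u w : {v : Fin n // (v : ℕ) < m}, G.Adj u.1 w.1 → c u ≠ c w} : ℝ) =
      ∏ i ∈ Finset.range m, ((x : ℝ) - eSeq G i) := by
  exact main_aux G x hG m hmn
end
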